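/- Suppose a discrepancy bound f(m) = c·sqrt(d·log log m) (for a constant c) holds at each halving step. If at each of t steps the data set size is halved starting from n, then the total KDE error satisfies ‖KDE_X − KDE_{X_t}‖_∞ ≤ Σ_{s=1}^{t} (2^{s−1}/n)·f(n/2^{s−1}), and this sum is at most a universal constant times its final term (2^{t−1}/n)·f(n/2^{t−1}), provided n/2^{t−1} ≥ 16. -/

import Mathlib

open Finset

private lemma sqrt_two_pow' (j : ℕ) : Real.sqrt (2 ^ j) = (Real.sqrt 2) ^ j := by
  induction j with
  | zero => simp
  | succ k ih => rw [pow_succ, pow_succ, Real.sqrt_mul (by positivity), ih]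

private lemma one_le_loglog16 : (1 : ℝ) ≤ Real.log (Real.log 16) := by
  have h16 : Real.log 16 = 4 * Real.log 2 := by
    rw [show (16 : ℝ) = 2 ^ 4 by norm_num, Real.log_pow]; push_cast; ring
  have hpos : (0 : ℝ) < Real.log 16 := by
    rw [h16]; nlinarith [Real.log_two_gt_d9]
  rw [Real.le_log_iff_exp_le hpos, h16]
  nlinarith [Real.exp_one_lt_d9, Real.log_two_gt_d9]

private lemma key_loglog (M : ℝ) (hM : 16 ≤ M) (j : ℕ) :
    Real.log (Real.log (M * 2 ^ j)) ≤ (1 + (j : ℝ)) * Real.log (Real.log M) := by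
  have hM0 : (0 : ℝ) < M := by linarith
  have hlog2 : Real.log 2 ≤ Real.log M := Real.log_le_log (by norm_num) (by linarith)
  have hlogM : (0 : ℝ) < Real.log M := Real.log_pos (by linarith)
  have hLL1 : 1 ≤ Real.log (Real.log M) := by
    refine le_trans one_le_loglog16 (Real.log_le_log ?_ (Real.log_le_log (by norm_num) hM))
    exact Real.log_pos (by norm_num)
  have h2j : (0 : ℝ) < 2 ^ j := by positivity
  have h1 : Real.log (M * 2 ^ j) ≤ (1 + (j : ℝ)) * Real.log M := by
    rw [Real.log_mul (ne_of_gt hM0) (ne_of_gt h2j), Real.log_pow]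
    have : (j : ℝ) * Real.log 2 ≤ (j : ℝ) * Real.log M :=
      mul_le_mul_of_nonneg_left hlog2 (Nat.cast_nonneg j)
    nlinarith
  have hpos' : 0 < Real.log (M * 2 ^ j) := by
    apply Real.log_pos
    have h1j : (1:ℝ) ≤ 2 ^ j := by
      have : (1:ℕ) ≤ 2 ^ j := Nat.one_le_two_pow
      exact_mod_cast this
    nlinarith
  have hj1 : (0 : ℝ) < 1 + (j : ℝ) := by positivity
  calc Real.log (Real.log (M * 2 ^ j))
      ≤ Real.log ((1 + (j : ℝ)) * Real.log M) := Real.log_le_log hpos' h1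
    _ = Real.log (1 + (j : ℝ)) + Real.log (Real.log M) :=
        Real.log_mul (ne_of_gt hj1) (ne_of_gt hlogM)
    _ ≤ (j : ℝ) + Real.log (Real.log M) := by
        have := Real.log_le_sub_one_of_pos hj1; linarith
    _ ≤ (j : ℝ) * Real.log (Real.log M) + Real.log (Real.log M) := by
        nlinarith [Nat.cast_nonneg (α := ℝ) j]
    _ = (1 + (j : ℝ)) * Real.log (Real.log M) := by ring

theorem halving_sum_dominated_by_last_term :
    ∃ C : ℝ, 0 < C ∧ ∀ (c d : ℝ) (n t : ℕ), 0 < c → 1 ≤ d → 1 ≤ t →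
      2 ^ (t - 1) ∣ n → (16 : ℝ) ≤ (n : ℝ) / 2 ^ (t - 1) →
      ∑ s ∈ Finset.Icc 1 t, ((2 : ℝ) ^ (s - 1) / (n : ℝ)) *
          (c * Real.sqrt (d * Real.log (Real.log ((n : ℝ) / 2 ^ (s - 1))))) ≤
        C * (((2 : ℝ) ^ (t - 1) / (n : ℝ)) *
          (c * Real.sqrt (d * Real.log (Real.log ((n : ℝ) / 2 ^ (t - 1)))))) := by
  refine ⟨4, by norm_num, ?_⟩
  intro c d n t hc hd ht _hdvd h16
  set M : ℝ := (n : ℝ) / 2 ^ (t - 1) with hMdef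
  have h2t : (0 : ℝ) < 2 ^ (t - 1) := by positivity
  have hn : (0 : ℝ) < n := by
    rw [le_div_iff₀ h2t] at h16
    nlinarith
  set S : ℝ := Real.sqrt (d * Real.log (Real.log M)) with hSdef
  have hS0 : 0 ≤ S := Real.sqrt_nonneg _
  set L : ℝ := (2 ^ (t - 1) / (n : ℝ)) * (c * S) with hLdef
  have hL0 : 0 ≤ L := by positivity
  set r : ℝ := (Real.sqrt 2)⁻¹ with hrdef
  have hs2 : Real.sqrt 2 * Real.sqrt 2 = 2 := Real.mul_self_sqrt (by norm_num)
  have hs2pos : 0 < Real.sqrt 2 := Real.sqrt_pos.mpr (by norm_num)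
  have hr0 : 0 ≤ r := by positivity
  have hr2 : r * 2 = Real.sqrt 2 := by
    rw [hrdef]; field_simp; rw [Real.sq_sqrt (by norm_num : (0:ℝ) ≤ 2)]
  -- per-term bound
  have hterm : ∀ s ∈ Finset.Icc 1 t,
      ((2 : ℝ) ^ (s - 1) / (n : ℝ)) *
          (c * Real.sqrt (d * Real.log (Real.log ((n : ℝ) / 2 ^ (s - 1))))) ≤
        L * r ^ (t - s) := by
    intro s hs
    obtain ⟨hs1, hst⟩ := Finset.mem_Icc.mp hs
    set j := t - s with hjdef
    have hexp : (2 : ℝ) ^ (t - 1) = 2 ^ (s - 1) * 2 ^ j := by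
      rw [← pow_add]; congr 1; omega
    have h2s : (0 : ℝ) < 2 ^ (s - 1) := by positivity
    have h2j : (0 : ℝ) < 2 ^ j := by positivity
    have hrw : (n : ℝ) / 2 ^ (s - 1) = M * 2 ^ j := by
      rw [hMdef, hexp]
      field_simp
    have hpowj : (Real.sqrt 2) ^ j = r ^ j * 2 ^ j := by
      rw [← mul_pow, hr2]
    have hsqrt : Real.sqrt (d * Real.log (Real.log (M * 2 ^ j))) ≤ (Real.sqrt 2) ^ j * S := by
      have hkey := key_loglog M h16 j
      have hstep : d * Real.log (Real.log (M * 2 ^ j)) ≤ (1 + (j : ℝ)) * (d * Real.log (Real.log M)) := by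
        have hLL1 : 1 ≤ Real.log (Real.log M) := by
          refine le_trans one_le_loglog16 (Real.log_le_log ?_ (Real.log_le_log (by norm_num) h16))
          exact Real.log_pos (by norm_num)
        nlinarith [Nat.cast_nonneg (α := ℝ) j]
      have hjpow : (1 : ℝ) + (j : ℝ) ≤ 2 ^ j := by
        have := Nat.lt_two_pow_self (n := j)
        have : (j : ℝ) < 2 ^ j := by exact_mod_cast this
        have hint : (j : ℝ) + 1 ≤ 2 ^ j := by
          have h2 := Nat.lt_two_pow_self (n := j)
          exact_mod_cast Nat.succ_le_of_lt h2
        linarith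
      calc Real.sqrt (d * Real.log (Real.log (M * 2 ^ j)))
          ≤ Real.sqrt ((1 + (j : ℝ)) * (d * Real.log (Real.log M))) := Real.sqrt_le_sqrt hstep
        _ = Real.sqrt (1 + (j : ℝ)) * S := by
            rw [hSdef, Real.sqrt_mul (by positivity)]
        _ ≤ Real.sqrt (2 ^ j) * S := by
            exact mul_le_mul_of_nonneg_right (Real.sqrt_le_sqrt hjpow) hS0
        _ = (Real.sqrt 2) ^ j * S := by rw [sqrt_two_pow']
    calc ((2 : ℝ) ^ (s - 1) / (n : ℝ)) *
            (c * Real.sqrt (d * Real.log (Real.log ((n : ℝ) / 2 ^ (s - 1)))))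
        ≤ ((2 : ℝ) ^ (s - 1) / (n : ℝ)) * (c * ((Real.sqrt 2) ^ j * S)) := by
          rw [hrw]
          have h1 : (0:ℝ) ≤ (2 : ℝ) ^ (s - 1) / (n : ℝ) := by positivity
          exact mul_le_mul_of_nonneg_left (mul_le_mul_of_nonneg_left hsqrt (le_of_lt hc)) h1
      _ = L * r ^ j := by
          rw [hLdef, hexp, hpowj]
          field_simp
  calc ∑ s ∈ Finset.Icc 1 t, ((2 : ℝ) ^ (s - 1) / (n : ℝ)) *
          (c * Real.sqrt (d * Real.log (Real.log ((n : ℝ) / 2 ^ (s - 1)))))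
      ≤ ∑ s ∈ Finset.Icc 1 t, L * r ^ (t - s) := Finset.sum_le_sum hterm
    _ = L * ∑ s ∈ Finset.Icc 1 t, r ^ (t - s) := by rw [Finset.mul_sum]
    _ = L * ∑ i ∈ Finset.range t, r ^ i := by
        congr 1
        rw [← Finset.Ico_add_one_right_eq_Icc, Finset.sum_Ico_eq_sum_range]
        simp only [Nat.add_sub_cancel]
        rw [← Finset.sum_range_reflect]
        apply Finset.sum_congr rfl
        intro i hi
        congr 1
        simp only [Finset.mem_range] at hi
        omega
    _ ≤ L * 4 := by
        apply mul_le_mul_of_nonneg_left _ hL0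
        have hr2sq : r ^ 2 = 1 / 2 := by nlinarith [hr2, hs2]
        have hrlt : r < 1 := by nlinarith [hs2, hs2pos, hr2, hr0]
        have h1r : (0:ℝ) < 1 - r := by linarith
        have hrt : 0 ≤ r ^ t := pow_nonneg hr0 t
        rw [geom_sum_eq (ne_of_lt hrlt)]
        rw [show (r ^ t - 1) / (r - 1) = (1 - r ^ t) / (1 - r) by
          rw [← neg_div_neg_eq]; ring_nf]
        rw [div_le_iff₀ h1r]
        nlinarith [hr2sq, hrt, hr0]
    _ = 4 * L := by ring
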